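/- Let E be a finite type, P sub-stochastic with spectral radius < 1, κ(x) = 1 − ∑_y P(x,y) with κ not identically zero on the support of the chain, μ a probability vector on E, and R = (I − P)⁻¹. Define the resurrected transition matrix Q(x,y) = P(x,y) + κ(x)μ(y). Then Q is stochastic (rows sum to 1), and the vector Π(x) = (μR)(x)/(μR·1) satisfies ΠQ = Π, i.e. Π is an invariant distribution of the resurrected chain. -/

import Mathlib

open Matrix Finset
attribute [local instance] Matrix.linftyOpNormedRing Matrix.linftyOpNormedAlgebra

/-- **Invariance of `Π(μ) ∝ μR` for the μ-resurrected chain.** With `P` sub-stochastic of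
spectral radius `< 1`, `κ x = 1 − ∑_y P x y` not identically zero, `R = (I − P)⁻¹`,
`Q x y = P x y + κ x * μ y`: `Q` is stochastic and `Pi x = (μR)(x)/(μR𝟙)` satisfies
`PiQ = Pi`. -/
theorem resurrected_invariant_distribution
    {E : Type*} [Fintype E] [DecidableEq E] [Nonempty E]
    (P : Matrix E E ℝ)
    (hP_nonneg : ∀ x y, 0 ≤ P x y) (hP_sub : ∀ x, ∑ y, P x y ≤ 1)
    (hP_spec : spectralRadius ℂ (P.map Complex.ofReal) < 1)
    (κ : E → ℝ) (hκ : ∀ x, κ x = 1 - ∑ y, P x y) (hκ_ne : ∃ x, κ x ≠ 0)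
    (μ : E → ℝ) (hμ_nonneg : ∀ x, 0 ≤ μ x) (hμ_sum : ∑ x, μ x = 1)
    (R : Matrix E E ℝ) (hR : R = (1 - P)⁻¹)
    (Q : Matrix E E ℝ) (hQ : ∀ x y, Q x y = P x y + κ x * μ y)
    (Pi : E → ℝ)
    (hPi : ∀ x, Pi x = (∑ z, μ z * R z x) / (∑ w, ∑ z, μ z * R z w)) :
    (∀ x, ∑ y, Q x y = 1) ∧ (∀ y, ∑ x, Pi x * Q x y = Pi y) := by
  -- Row sums of Q
  have hQrow : ∀ x, ∑ y, Q x y = 1 := by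
    intro x
    simp only [hQ]
    rw [Finset.sum_add_distrib, ← Finset.mul_sum, hμ_sum, hκ x]
    ring
  refine ⟨hQrow, ?_⟩
  -- `1 - P` is invertible since the spectral radius of `P` is `< 1`
  have hunitC : IsUnit ((1 : Matrix E E ℂ) - P.map Complex.ofReal) := by
    have h1 : spectralRadius ℂ (P.map Complex.ofReal) < ‖(1 : ℂ)‖₊ := by
      simpa using hP_spec
    have := spectrum.mem_resolventSet_of_spectralRadius_lt h1
    rw [resolventSet] at this
    simpa [Algebra.algebraMap_eq_smul_one] using this
  have hdet : IsUnit (1 - P).det := by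
    have hmapC : Complex.ofRealHom.mapMatrix ((1 : Matrix E E ℝ) - P)
        = (1 : Matrix E E ℂ) - P.map Complex.ofReal := by
      ext i j
      simp [RingHom.mapMatrix_apply, Matrix.map_apply, Matrix.one_apply, Matrix.sub_apply]
      split <;> simp
    have hdetC : IsUnit ((1 : Matrix E E ℂ) - P.map Complex.ofReal).det :=
      (Matrix.isUnit_iff_isUnit_det _).mp hunitC
    rw [← hmapC, ← RingHom.map_det] at hdetC
    have h0 : ((1 - P).det : ℂ) ≠ 0 := hdetC.ne_zero
    exact isUnit_iff_ne_zero.mpr (by exact_mod_cast h0)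
  have hRmul : R * (1 - P) = 1 := by rw [hR]; exact Matrix.nonsing_inv_mul _ hdet
  -- ν := μ R
  set ν : E → ℝ := fun x => ∑ z, μ z * R z x with hν
  -- key identity: ν (1 - P) = μ componentwise
  have hE : ∀ z y, ∑ x, R z x * ((1 : Matrix E E ℝ) x y - P x y) = (1 : Matrix E E ℝ) z y := by
    intro z y
    have h := congrFun (congrFun hRmul z) y
    simpa [Matrix.mul_apply, Matrix.sub_apply] using h
  have hkey : ∀ y, ∑ x, ν x * P x y = ν y - μ y := by
    intro y
    have hmain : ∑ x, ν x * ((1 : Matrix E E ℝ) x y - P x y) = μ y := by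
      calc ∑ x, ν x * ((1 : Matrix E E ℝ) x y - P x y)
          = ∑ x, ∑ z, μ z * (R z x * ((1 : Matrix E E ℝ) x y - P x y)) := by
            refine Finset.sum_congr rfl fun x _ => ?_
            rw [hν]
            simp only [Finset.sum_mul, mul_assoc]
        _ = ∑ z, μ z * ∑ x, R z x * ((1 : Matrix E E ℝ) x y - P x y) := by
            rw [Finset.sum_comm]
            exact Finset.sum_congr rfl fun z _ => (Finset.mul_sum _ _ _).symm
        _ = ∑ z, μ z * (1 : Matrix E E ℝ) z y := by
            exact Finset.sum_congr rfl fun z _ => by rw [hE z y]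
        _ = μ y := by simp [Matrix.one_apply, mul_ite]
    have hone : ∑ x, ν x * (1 : Matrix E E ℝ) x y = ν y := by
      simp [Matrix.one_apply, mul_ite]
    have hsub : ∑ x, (ν x * (1 : Matrix E E ℝ) x y - ν x * P x y) = μ y := by
      simpa [mul_sub] using hmain
    rw [Finset.sum_sub_distrib, hone] at hsub
    linarith
  -- total kill mass: ∑ x, ν x * κ x = 1
  have hκmass : ∑ x, ν x * κ x = 1 := by
    calc ∑ x, ν x * κ x
        = ∑ x, (ν x - ∑ y, ν x * P x y) := by
          refine Finset.sum_congr rfl fun x _ => ?_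
          rw [hκ x, mul_sub, mul_one, Finset.mul_sum]
      _ = ∑ x, ν x - ∑ x, ∑ y, ν x * P x y := Finset.sum_sub_distrib _ _
      _ = ∑ x, ν x - ∑ y, ∑ x, ν x * P x y := by
          congr 1
          exact Finset.sum_comm
      _ = ∑ x, ν x - ∑ y, (ν y - μ y) := by simp only [hkey]
      _ = 1 := by rw [Finset.sum_sub_distrib, hμ_sum]; ring
  -- invariance of ν for Q
  have hνQ : ∀ y, ∑ x, ν x * Q x y = ν y := by
    intro y
    have h : ∑ x, ν x * Q x y = (∑ x, ν x * P x y) + (∑ x, ν x * κ x) * μ y := by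
      rw [Finset.sum_mul, ← Finset.sum_add_distrib]
      refine Finset.sum_congr rfl fun x _ => ?_
      rw [hQ]; ring
    rw [h, hkey y, hκmass]; ring
  -- conclude for Pi (works even if the normalizer is zero, by `div` conventions)
  intro y
  set S : ℝ := ∑ w, ∑ z, μ z * R z w with hS
  have hPi' : ∀ x, Pi x = ν x / S := fun x => hPi x
  calc ∑ x, Pi x * Q x y = (∑ x, ν x * Q x y) / S := by
        rw [Finset.sum_div]
        exact Finset.sum_congr rfl fun x _ => by rw [hPi' x, div_mul_eq_mul_div]
    _ = ν y / S := by rw [hνQ y]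
    _ = Pi y := (hPi' y).symm
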